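/- Let q ⊆ Q be prime ideals of B and set D_e = D_Q ∩ D_q. For roots β, β' of f in M, the pairs (φ_β⁻¹(Q), φ_β⁻¹(q)) and (φ_{β'}⁻¹(Q), φ_{β'}⁻¹(q)) of prime ideals of C are equal if and only if β and β' lie in the same D_Q-orbit and in the same D_q-orbit of the set of roots of f in M. -/

import Mathlib

set_option linter.unusedSectionVars false
set_option maxHeartbeats 1000000


/-- The restriction of an algebra homomorphism `ψ : L' →ₐ[L] M` to a map between the
integral closures of `A` in `L'` and in `M`. -/
noncomputable def restrictToIntegralClosure (A : Type*) {L L' M : Type*}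
    [CommRing A] [Field L] [Field L'] [Field M]
    [Algebra A L] [Algebra A L'] [Algebra A M]
    [Algebra L L'] [Algebra L M]
    [IsScalarTower A L L'] [IsScalarTower A L M]
    (ψ : L' →ₐ[L] M) : integralClosure A L' →ₐ[A] integralClosure A M :=
  AlgHom.codRestrict ((ψ.restrictScalars A).comp (integralClosure A L').val)
    (integralClosure A M)
    (fun x => x.2.map ((ψ.restrictScalars A)))

theorem aux_inv_cancel_M {R A₁ : Type*} [CommSemiring R] [Semiring A₁] [Algebra R A₁]
    (σ : A₁ ≃ₐ[R] A₁) (m : A₁) : σ⁻¹ (σ m) = m :=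
  AlgEquiv.symm_apply_apply σ m

theorem aux_fix_inv {R A₁ : Type*} [CommSemiring R] [Semiring A₁] [Algebra R A₁]
    {σ : A₁ ≃ₐ[R] A₁} {m : A₁} (h : σ m = m) : σ⁻¹ m = m :=
  (congrArg _ h).symm.trans (aux_inv_cancel_M σ m)

theorem aux_prod_mem {R ι : Type*} [CommRing R] {P : Ideal R} [hP : P.IsPrime]
    (T : Finset ι) (u : ι → R) (h : ∏ i ∈ T, u i ∈ P) : ∃ i ∈ T, u i ∈ P := by
  classical
  induction T using Finset.induction_on with
  | empty =>
      simp only [Finset.prod_empty] at h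
      exact absurd ((Ideal.eq_top_iff_one P).mpr h) hP.ne_top
  | @insert a s ha ih =>
      rw [Finset.prod_insert ha] at h
      rcases hP.mem_or_mem h with h | h
      · exact ⟨a, Finset.mem_insert_self a s, h⟩
      · obtain ⟨i, hi, hui⟩ := ih h
        exact ⟨i, Finset.mem_insert_of_mem hi, hui⟩

section Aux

variable {A L L' M : Type*} [CommRing A] [IsDomain A] [IsIntegrallyClosed A] [IsNoetherianRing A]
    [Field L] [Field L'] [Field M]
    [Algebra A L] [IsFractionRing A L]
    [Algebra L L'] [Algebra L M] [Algebra L' M]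
    [Algebra A L'] [Algebra A M]
    [IsScalarTower A L L'] [IsScalarTower A L M] [IsScalarTower L L' M]
    [IsGalois L M] [FiniteDimensional L M]

theorem aux_algHom_ext {α' : L'} (hgen : IntermediateField.adjoin L ({α'} : Set L') = ⊤)
    {ψ₁ ψ₂ : L' →ₐ[L] M} (h : ψ₁ α' = ψ₂ α') : ψ₁ = ψ₂ := by
  ext x
  have hx : x ∈ IntermediateField.adjoin L ({α'} : Set L') := hgen ▸ IntermediateField.mem_top
  refine IntermediateField.adjoin_induction L (fun y hy => ?_) (fun r => ?_)
    (fun a b _ _ ha hb => ?_) (fun a _ ha => ?_) (fun a b _ _ ha hb => ?_) hx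
  · rcases Set.mem_singleton_iff.mp hy with rfl
    exact h
  · simp
  · simp [map_add, ha, hb]
  · simp [map_inv₀, ha]
  · simp [map_mul, ha, hb]

theorem aux_gal_coe (σ : M ≃ₐ[L] M) (x : integralClosure A M) :
    (galRestrict A L M (integralClosure A M) σ x : M) = σ (x : M) :=
  algebraMap_galRestrict_apply A σ x

theorem aux_res_coe (ψ : L' →ₐ[L] M) (x : integralClosure A L') :
    (restrictToIntegralClosure A ψ x : M) = ψ (x : L') := rfl

theorem aux_gal_cancel₁ (σ : M ≃ₐ[L] M) (x : integralClosure A M) :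
    galRestrict A L M (integralClosure A M) σ⁻¹
      (galRestrict A L M (integralClosure A M) σ x) = x := by
  apply Subtype.ext
  rw [aux_gal_coe, aux_gal_coe, aux_inv_cancel_M]

theorem aux_gal_cancel₂ (σ : M ≃ₐ[L] M) (x : integralClosure A M) :
    galRestrict A L M (integralClosure A M) σ
      (galRestrict A L M (integralClosure A M) σ⁻¹ x) = x := by
  have := aux_gal_cancel₁ (A := A) σ⁻¹ x
  rwa [inv_inv] at this

theorem aux_gal_mul (σ τ : M ≃ₐ[L] M) (x : integralClosure A M) :
    galRestrict A L M (integralClosure A M) (σ * τ) x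
      = galRestrict A L M (integralClosure A M) σ
          (galRestrict A L M (integralClosure A M) τ x) := by
  apply Subtype.ext
  rw [aux_gal_coe, aux_gal_coe, aux_gal_coe, AlgEquiv.mul_apply]

theorem aux_map_eq (σ : M ≃ₐ[L] M) (P : Ideal (integralClosure A M)) :
    Ideal.map (galRestrict A L M (integralClosure A M) σ) P
      = Ideal.comap (galRestrict A L M (integralClosure A M) σ⁻¹) P := by
  apply le_antisymm
  · rw [Ideal.map_le_iff_le_comap]
    intro a ha
    rw [Ideal.mem_comap, Ideal.mem_comap, aux_gal_cancel₁]
    exact ha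
  · intro x hx
    rw [Ideal.mem_comap] at hx
    have := Ideal.mem_map_of_mem (galRestrict A L M (integralClosure A M) σ) hx
    rwa [aux_gal_cancel₂] at this

theorem aux_key (f : Polynomial L) (hirr : Irreducible f)
    (α' : L')
    (hgen : IntermediateField.adjoin L ({α'} : Set L') = ⊤)
    (φ : ∀ β : M, Polynomial.aeval β f = 0 → (L' →ₐ[L] M))
    (hφ : ∀ (β : M) (hβ : Polynomial.aeval β f = 0), φ β hβ α' = β)
    (P : Ideal (integralClosure A M)) [P.IsPrime]
    (β β' : M) (hβ : Polynomial.aeval β f = 0) (hβ' : Polynomial.aeval β' f = 0) :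
    Ideal.comap (restrictToIntegralClosure A (φ β hβ)) P
        = Ideal.comap (restrictToIntegralClosure A (φ β' hβ')) P ↔
    ∃ σ : M ≃ₐ[L] M,
        Ideal.map (galRestrict A L M (integralClosure A M) σ) P = P ∧ σ β = β' := by
  classical
  constructor
  · intro hcomap
    -- find τ with τ β = β'
    have hminβ : f * Polynomial.C f.leadingCoeff⁻¹ = minpoly L β :=
      minpoly.eq_of_irreducible hirr hβ
    have hminβ' : f * Polynomial.C f.leadingCoeff⁻¹ = minpoly L β' :=
      minpoly.eq_of_irreducible hirr hβ'
    have horb : β' ∈ MulAction.orbit (M ≃ₐ[L] M) β := by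
      rw [← Normal.minpoly_eq_iff_mem_orbit M, ← hminβ, ← hminβ']
    obtain ⟨τ, hτβ⟩ := horb
    have hτβ : τ β = β' := hτβ
    have hτφ : τ.toAlgHom.comp (φ β hβ) = φ β' hβ' :=
      aux_algHom_ext hgen (by simp [hφ, hτβ])
    set Q₁ : Ideal (integralClosure A M) :=
      Ideal.comap (galRestrict A L M (integralClosure A M) τ) P with hQ₁def
    haveI : Q₁.IsPrime := Ideal.IsPrime.comap _
    -- comap of Q₁ along φ β equals comap of P along φ β'
    have hres : ∀ c : integralClosure A L',
        galRestrict A L M (integralClosure A M) τ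
          (restrictToIntegralClosure A (φ β hβ) c)
        = restrictToIntegralClosure A (φ β' hβ') c := by
      intro c
      apply Subtype.ext
      rw [aux_gal_coe, aux_res_coe, aux_res_coe]
      exact DFunLike.congr_fun hτφ (c : L')
    have hQ₁ : Ideal.comap (restrictToIntegralClosure A (φ β hβ)) Q₁
        = Ideal.comap (restrictToIntegralClosure A (φ β hβ)) P := by
      ext c
      rw [Ideal.mem_comap, hQ₁def, Ideal.mem_comap, hres, ← Ideal.mem_comap, ← hcomap,
        Ideal.mem_comap]
    -- prime avoidance: Q₁ is contained in some conjugate of P by an element fixing β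
    set T : Finset (M ≃ₐ[L] M) := Finset.univ.filter (fun ρ : M ≃ₐ[L] M => ρ β = β) with hT
    have hmemT : ∀ ρ : M ≃ₐ[L] M, ρ ∈ T ↔ ρ β = β := by
      intro ρ; simp [hT]
    have hsub : (Q₁ : Set (integralClosure A M)) ⊆
        ⋃ ρ ∈ (T : Set (M ≃ₐ[L] M)),
          (Ideal.map (galRestrict A L M (integralClosure A M) ρ) P :
            Set (integralClosure A M)) := by
      intro x hx
      have h1T : (1 : M ≃ₐ[L] M) ∈ T := (hmemT 1).mpr rfl
      set y : integralClosure A M :=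
        ∏ ρ ∈ T, galRestrict A L M (integralClosure A M) ρ x with hy
      have hyQ₁ : y ∈ Q₁ := by
        rw [hy, ← Finset.mul_prod_erase T _ h1T]
        have h1 : galRestrict A L M (integralClosure A M) 1 x = x := by
          apply Subtype.ext
          rw [aux_gal_coe, AlgEquiv.one_apply]
        rw [h1]
        exact Q₁.mul_mem_right _ hx
      have hycoe : (y : M) = ∏ ρ ∈ T, ρ (x : M) := by
        show (integralClosure A M).val y = _
        rw [hy, map_prod]
        exact Finset.prod_congr rfl (fun ρ _ => aux_gal_coe ρ x)
      have hyfix : ∀ ρ' : M ≃ₐ[L] M, ρ' β = β → ρ' (y : M) = (y : M) := by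
        intro ρ' hρ'
        rw [hycoe, map_prod]
        refine Finset.prod_bij' (fun ρ _ => ρ' * ρ) (fun ρ _ => ρ'⁻¹ * ρ) ?_ ?_ ?_ ?_ ?_
        · intro a ha
          rw [hmemT] at ha ⊢
          rw [AlgEquiv.mul_apply, ha, hρ']
        · intro a ha
          rw [hmemT] at ha ⊢
          rw [AlgEquiv.mul_apply, ha]
          exact aux_fix_inv hρ'
        · intro a _; group
        · intro a _; group
        · intro a _; rw [AlgEquiv.mul_apply]
      have hyadj : (y : M) ∈ IntermediateField.adjoin L ({β} : Set M) := by
        have hfix2 : (y : M) ∈ IntermediateField.fixedField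
            (IntermediateField.fixingSubgroup (IntermediateField.adjoin L ({β} : Set M))) := by
          intro gg
          exact hyfix gg.1 ((mem_fixingSubgroup_iff (M ≃ₐ[L] M)).mp gg.2 β
            (IntermediateField.mem_adjoin_simple_self L β))
        rwa [IsGalois.fixedField_fixingSubgroup] at hfix2
      have hrange : (y : M) ∈ (φ β hβ).fieldRange := by
        refine IntermediateField.adjoin_le_iff.mpr ?_ hyadj
        intro z hz
        rw [Set.mem_singleton_iff.mp hz]
        exact ⟨α', hφ β hβ⟩
      obtain ⟨z, hz⟩ := hrange
      have hzint : IsIntegral A z := by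
        have h1 : IsIntegral A ((φ β hβ).restrictScalars A z) := by
          have hy2 : IsIntegral A (y : M) := y.2
          rwa [← hz] at hy2
        exact (isIntegral_algHom_iff ((φ β hβ).restrictScalars A)
          (((φ β hβ).restrictScalars A).toRingHom.injective)).mp h1
      have hyP : y ∈ P := by
        have hc : (⟨z, hzint⟩ : integralClosure A L') ∈
            Ideal.comap (restrictToIntegralClosure A (φ β hβ)) Q₁ := by
          rw [Ideal.mem_comap]
          have : restrictToIntegralClosure A (φ β hβ) ⟨z, hzint⟩ = y :=
            Subtype.ext (by rw [aux_res_coe]; exact hz)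
          rw [this]; exact hyQ₁
        rw [hQ₁, Ideal.mem_comap] at hc
        have : restrictToIntegralClosure A (φ β hβ) ⟨z, hzint⟩ = y :=
          Subtype.ext (by rw [aux_res_coe]; exact hz)
        rwa [this] at hc
      obtain ⟨ρ, hρT, hρP⟩ :=
        aux_prod_mem T (fun ρ => galRestrict A L M (integralClosure A M) ρ x) (hy ▸ hyP)
      refine Set.mem_iUnion₂.mpr ⟨ρ⁻¹, ?_, ?_⟩
      · show ρ⁻¹ ∈ T
        rw [hmemT] at hρT ⊢
        exact aux_fix_inv hρT
      · show x ∈ Ideal.map (galRestrict A L M (integralClosure A M) ρ⁻¹) P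
        rw [aux_map_eq, inv_inv, Ideal.mem_comap]
        exact hρP
    obtain ⟨ρ, hρT, hle⟩ := (Ideal.subset_union_prime 1 1
      (fun ρ _ _ _ => by rw [aux_map_eq]; exact Ideal.IsPrime.comap _)).mp hsub
    have hρβ : ρ β = β := (hmemT ρ).mp hρT
    have hρinvβ : ρ⁻¹ β = β := aux_fix_inv hρβ
    have hρφ : (ρ⁻¹ : M ≃ₐ[L] M).toAlgHom.comp (φ β hβ) = φ β hβ :=
      aux_algHom_ext hgen (by simp [hφ, hρinvβ]; exact hρinvβ)
    have hcomapmap :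
        Ideal.comap (restrictToIntegralClosure A (φ β hβ))
            (Ideal.map (galRestrict A L M (integralClosure A M) ρ) P)
          = Ideal.comap (restrictToIntegralClosure A (φ β hβ)) P := by
      ext c
      rw [Ideal.mem_comap, Ideal.mem_comap, aux_map_eq, Ideal.mem_comap]
      have heq : galRestrict A L M (integralClosure A M) ρ⁻¹
          (restrictToIntegralClosure A (φ β hβ) c)
          = restrictToIntegralClosure A (φ β hβ) c := by
        apply Subtype.ext
        rw [aux_gal_coe, aux_res_coe]
        exact DFunLike.congr_fun hρφ (c : L')
      rw [heq]
    have heqQ : Q₁ = Ideal.map (galRestrict A L M (integralClosure A M) ρ) P := by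
      by_contra hne
      have hlt : Q₁ < Ideal.map (galRestrict A L M (integralClosure A M) ρ) P :=
        lt_of_le_of_ne hle hne
      obtain ⟨x, hxmem, hxnot⟩ := SetLike.exists_of_lt hlt
      letI : Algebra (integralClosure A L') (integralClosure A M) :=
        ((restrictToIntegralClosure A (φ β hβ)).toRingHom).toAlgebra
      have halg : algebraMap (integralClosure A L') (integralClosure A M)
          = (restrictToIntegralClosure A (φ β hβ)).toRingHom := rfl
      haveI : IsScalarTower A (integralClosure A L') (integralClosure A M) :=
        IsScalarTower.of_algebraMap_eq
          (fun a => ((restrictToIntegralClosure A (φ β hβ)).commutes a).symm)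
      have hxint : IsIntegral (integralClosure A L') x :=
        (integralClosure.isIntegral x).tower_top
      have hlt2 := Ideal.comap_lt_comap_of_integral_mem_sdiff (R := integralClosure A L')
        (I := Q₁) hle ⟨hxmem, hxnot⟩ hxint
      rw [halg, AlgHom.toRingHom_eq_coe, Ideal.comap_coe, Ideal.comap_coe,
        hcomapmap, hQ₁] at hlt2
      exact lt_irrefl _ hlt2
    refine ⟨τ * ρ, ?_, by rw [AlgEquiv.mul_apply, hρβ, hτβ]⟩
    rw [aux_map_eq, mul_inv_rev]
    ext x
    rw [Ideal.mem_comap, aux_gal_mul, ← Ideal.mem_comap, ← aux_map_eq, ← heqQ, hQ₁def,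
      Ideal.mem_comap, aux_gal_cancel₂]
  · rintro ⟨σ, hmap, hσβ⟩
    have hσφ : σ.toAlgHom.comp (φ β hβ) = φ β' hβ' :=
      aux_algHom_ext hgen (by simp [hφ, hσβ])
    have hcom : Ideal.comap (galRestrict A L M (integralClosure A M) σ) P = P := by
      have h2 := Ideal.comap_map_of_bijective
        (galRestrict A L M (integralClosure A M) σ)
        (galRestrict A L M (integralClosure A M) σ).bijective (I := P)
      rwa [hmap] at h2
    ext c
    rw [Ideal.mem_comap, Ideal.mem_comap]
    have heq : galRestrict A L M (integralClosure A M) σ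
        (restrictToIntegralClosure A (φ β hβ) c)
        = restrictToIntegralClosure A (φ β' hβ') c := by
      apply Subtype.ext
      rw [aux_gal_coe, aux_res_coe, aux_res_coe]
      exact DFunLike.congr_fun hσφ (c : L')
    constructor
    · intro h
      have h2 := Ideal.mem_map_of_mem (galRestrict A L M (integralClosure A M) σ) h
      rw [hmap] at h2
      rwa [heq] at h2
    · intro h
      rw [← heq] at h
      have h2 : restrictToIntegralClosure A (φ β hβ) c ∈
          Ideal.comap (galRestrict A L M (integralClosure A M) σ) P := h
      rwa [hcom] at h2

end Aux

/-- In the AKLB setup with `f`, `α'`, `L'`, `C = integralClosure A L'` and the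
embeddings `φ β` as in Statement 3: let `q ⊆ Q` be primes of `B = integralClosure A M` and set
`D_e = D_Q ∩ D_q`. For roots `β, β'` of `f` in `M`, the pairs `((φ_β)⁻¹(Q), (φ_β)⁻¹(q))` and
`((φ_{β'})⁻¹(Q), (φ_{β'})⁻¹(q))` of primes of `C` are equal if and only if `β` and `β'` lie in
the same `D_Q`-orbit and in the same `D_q`-orbit of the set of roots of `f` in `M`. -/
theorem prime_pairs_eq_iff_same_orbits
    {A L L' M : Type*} [CommRing A] [IsDomain A] [IsIntegrallyClosed A] [IsNoetherianRing A]
    [Field L] [Field L'] [Field M]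
    [Algebra A L] [IsFractionRing A L]
    [Algebra L L'] [Algebra L M] [Algebra L' M]
    [Algebra A L'] [Algebra A M]
    [IsScalarTower A L L'] [IsScalarTower A L M] [IsScalarTower L L' M]
    [IsGalois L M] [FiniteDimensional L M]
    (f : Polynomial L) (hirr : Irreducible f) (hsep : f.Separable)
    (hsplit : (f.map (algebraMap L M)).Splits)
    (α' : L') (hα' : Polynomial.aeval α' f = 0)
    (hgen : IntermediateField.adjoin L ({α'} : Set L') = ⊤)
    (φ : ∀ β : M, Polynomial.aeval β f = 0 → (L' →ₐ[L] M))
    (hφ : ∀ (β : M) (hβ : Polynomial.aeval β f = 0), φ β hβ α' = β)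
    (Q q : Ideal (integralClosure A M)) [Q.IsPrime] [q.IsPrime] (hqQ : q ≤ Q)
    (β β' : M) (hβ : Polynomial.aeval β f = 0) (hβ' : Polynomial.aeval β' f = 0) :
    (Ideal.comap (restrictToIntegralClosure A (φ β hβ)) Q
        = Ideal.comap (restrictToIntegralClosure A (φ β' hβ')) Q ∧
      Ideal.comap (restrictToIntegralClosure A (φ β hβ)) q
        = Ideal.comap (restrictToIntegralClosure A (φ β' hβ')) q) ↔
    ((∃ σ : M ≃ₐ[L] M,
        Ideal.map (galRestrict A L M (integralClosure A M) σ) Q = Q ∧ σ β = β') ∧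
      (∃ τ : M ≃ₐ[L] M,
        Ideal.map (galRestrict A L M (integralClosure A M) τ) q = q ∧ τ β = β')) :=
  and_congr (aux_key f hirr α' hgen φ hφ Q β β' hβ hβ')
    (aux_key f hirr α' hgen φ hφ q β β' hβ hβ')
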